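/- If P : [0,1] → ℝ≥0 is (α,β)-close for price posting to R : [0,1] → ℝ≥0 with R nondecreasing on [0, 1/β] ∪ nonnegative, R(0)=0, R concave, and P ≤ R pointwise, then sup_q P(q) ≥ (1/(αβ)) · sup_q R(q). -/

import Mathlib

/-- If a price-posting revenue curve `P` lies below a concave ex ante revenue
curve `R` with `R 0 = 0` and is `(α,β)`-close to it for price posting, then
the optimal price-posting revenue is an `αβ`-approximation to the optimal
single-agent revenue. -/
theorem optimal_price_approximates_optimal_revenue (P R : ℝ → ℝ) (α β : ℝ)
    (hα : 1 ≤ α) (hβ : 1 ≤ β)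
    (hRnn : ∀ q ∈ Set.Icc (0 : ℝ) 1, 0 ≤ R q)
    (hRmono : MonotoneOn R (Set.Icc (0 : ℝ) (1 / β)))
    (hR0 : R 0 = 0)
    (hconc : ConcaveOn ℝ (Set.Icc (0 : ℝ) 1) R)
    (hPR : ∀ q ∈ Set.Icc (0 : ℝ) 1, P q ≤ R q)
    (hclose : ∀ q ∈ Set.Icc (0 : ℝ) (1 / β), R q / α ≤ P q) :
    (1 / (α * β)) * sSup (R '' Set.Icc (0 : ℝ) 1) ≤ sSup (P '' Set.Icc (0 : ℝ) 1) := by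
  have hβ0 : (0:ℝ) < β := lt_of_lt_of_le one_pos hβ
  have hα0 : (0:ℝ) < α := lt_of_lt_of_le one_pos hα
  have hb0 : (0:ℝ) ≤ 1 / β := by positivity
  have hb1 : 1 / β ≤ 1 := by
    rw [div_le_one hβ0]; exact hβ
  have hbIcc : (1/β) ∈ Set.Icc (0:ℝ) 1 := ⟨hb0, hb1⟩
  have hRb : 0 ≤ R (1/β) := hRnn _ hbIcc
  -- Key bound: R q ≤ β * R (1/β) for all q ∈ [0,1]
  have key : ∀ q ∈ Set.Icc (0:ℝ) 1, R q ≤ β * R (1/β) := by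
    intro q ⟨hq0, hq1⟩
    by_cases hcase : q ≤ 1/β
    · have h1 : R q ≤ R (1/β) :=
        hRmono ⟨hq0, hcase⟩ ⟨hb0, le_refl _⟩ hcase
      nlinarith
    · push_neg at hcase
      have hq0' : 0 < q := lt_trans (by positivity) hcase
      set t := 1 / (β * q) with ht
      have ht0 : 0 < t := by positivity
      have h1q : 1 < β * q := by
        rw [mul_comm]; exact (div_lt_iff₀ hβ0).mp hcase
      have ht1 : t ≤ 1 := by
        rw [ht, div_le_one (by positivity)]; linarith
      have hcomb : (1 - t) • (0:ℝ) + t • q = 1/β := by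
        simp only [smul_eq_mul, mul_zero, zero_add, ht]; field_simp
      have := hconc.2 (Set.left_mem_Icc.2 one_pos.le) ⟨hq0, hq1⟩
        (by linarith : (0:ℝ) ≤ 1 - t) ht0.le (by ring)
      rw [hcomb] at this
      simp only [smul_eq_mul, hR0, mul_zero, zero_add] at this
      -- t * R q ≤ R (1/β), so R q ≤ R(1/β)/t = β q R(1/β) ≤ β R(1/β)
      have hRq : R q ≤ β * q * R (1/β) := by
        have h2 : t * R q ≤ R (1/β) := this
        rw [ht] at h2
        have hbq : (0:ℝ) < β * q := by positivity
        calc R q = (β * q) * ((1/(β*q)) * R q) := by field_simp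
        _ ≤ (β * q) * R (1/β) := by
            apply mul_le_mul_of_nonneg_left h2 hbq.le
        _ = β * q * R (1/β) := by ring
      nlinarith [mul_nonneg (mul_nonneg hβ0.le (sub_nonneg.2 hq1)) hRb]
  have hne : (Set.Icc (0:ℝ) 1).Nonempty := ⟨0, le_refl 0, one_pos.le⟩
  have hRsup : sSup (R '' Set.Icc (0:ℝ) 1) ≤ β * R (1/β) := by
    apply Real.sSup_le
    · rintro y ⟨q, hq, rfl⟩; exact key q hq
    · positivity
  have hPb : ∀ q ∈ Set.Icc (0:ℝ) 1, P q ≤ β * R (1/β) := fun q hq =>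
    le_trans (hPR q hq) (key q hq)
  have hPbdd : BddAbove (P '' Set.Icc (0:ℝ) 1) := by
    refine ⟨β * R (1/β), ?_⟩
    rintro y ⟨q, hq, rfl⟩; exact hPb q hq
  have hPmem : P (1/β) ≤ sSup (P '' Set.Icc (0:ℝ) 1) :=
    le_csSup hPbdd ⟨1/β, hbIcc, rfl⟩
  have hRP : R (1/β) ≤ α * P (1/β) := by
    have := hclose (1/β) ⟨hb0, le_refl _⟩
    rw [div_le_iff₀ hα0] at this
    linarith [mul_comm (P (1/β)) α]
  have hchain : sSup (R '' Set.Icc (0:ℝ) 1) ≤ α * β * sSup (P '' Set.Icc (0:ℝ) 1) := by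
    calc sSup (R '' Set.Icc (0:ℝ) 1) ≤ β * R (1/β) := hRsup
    _ ≤ β * (α * P (1/β)) := by
        apply mul_le_mul_of_nonneg_left hRP hβ0.le
    _ = α * β * P (1/β) := by ring
    _ ≤ α * β * sSup (P '' Set.Icc (0:ℝ) 1) := by
        apply mul_le_mul_of_nonneg_left hPmem (by positivity)
  rw [one_div, inv_mul_le_iff₀ (by positivity : (0:ℝ) < α * β)]
  exact hchain
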